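/- Let n, k, b be integers with 1 ≤ k-1 ≤ b ≤ n. Then the bandwidth of G_{n,k,b} satisfies B(G_{n,k,b}) ≤ k·C(b,k), where C(b,k) denotes the binomial coefficient. -/

import Mathlib

/-- The maximum element of a finite set of naturals (`0` for the empty set). -/
def fmax (X : Finset ℕ) : ℕ := WithBot.unbotD 0 X.max

/-- The minimum element of a finite set of naturals (`0` for the empty set). -/
def fmin (X : Finset ℕ) : ℕ := WithTop.untopD 0 X.min

/-- The vertex set `V_{n,k,b}`: all `k`-element subsets `X` of `{0,…,n}`
with `max X - min X ≤ b`. -/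
def Vnkb (n k b : ℕ) : Finset (Finset ℕ) :=
  ((Finset.range (n + 1)).powersetCard k).filter (fun X => fmax X - fmin X ≤ b)

/-- The graph `G_{n,k,b}`: two distinct vertices `X, Y` are adjacent iff
`max (X ∪ Y) - min (X ∪ Y) ≤ b`. -/
def Gnkb (n k b : ℕ) : SimpleGraph (Vnkb n k b) where
  Adj X Y := X ≠ Y ∧ fmax (X.1 ∪ Y.1) - fmin (X.1 ∪ Y.1) ≤ b
  symm := by
    refine ⟨?_⟩
    rintro X Y ⟨h1, h2⟩
    exact ⟨h1.symm, by rwa [Finset.union_comm]⟩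
  loopless := ⟨by rintro X ⟨h1, -⟩; exact h1 rfl⟩

/-- The bandwidth of a finite graph: the minimum over all bijective labellings of the
vertices by `{0, …, |V|-1}` (equivalently `{1, …, |V|}`) of the maximal absolute
label difference along an edge. -/
noncomputable def bandwidth {V : Type*} [Fintype V] (G : SimpleGraph V) : ℕ :=
  sInf {m : ℕ | ∃ f : V ≃ Fin (Fintype.card V),
    ∀ u v : V, G.Adj u v → (((f u : ℕ) : ℤ) - ((f v : ℕ) : ℤ)).natAbs ≤ m}

lemma fmin_eq {X : Finset ℕ} (h : X.Nonempty) : fmin X = X.min' h := by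
  rw [fmin, ← Finset.coe_min' h]; rfl

lemma fmax_eq {X : Finset ℕ} (h : X.Nonempty) : fmax X = X.max' h := by
  rw [fmax, ← Finset.coe_max' h]; rfl

lemma fmin_mem {X : Finset ℕ} (h : X.Nonempty) : fmin X ∈ X := by
  rw [fmin_eq h]; exact X.min'_mem h

lemma fmax_mem {X : Finset ℕ} (h : X.Nonempty) : fmax X ∈ X := by
  rw [fmax_eq h]; exact X.max'_mem h

lemma fmin_le {X : Finset ℕ} {x : ℕ} (hx : x ∈ X) : fmin X ≤ x := by
  rw [fmin_eq ⟨x, hx⟩]; exact Finset.min'_le X x hx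

lemma le_fmax {X : Finset ℕ} {x : ℕ} (hx : x ∈ X) : x ≤ fmax X := by
  rw [fmax_eq ⟨x, hx⟩]; exact Finset.le_max' X x hx

lemma spread {X : Finset ℕ} {k : ℕ} (hc : X.card = k) (hk : 1 ≤ k) :
    fmin X + k ≤ fmax X + 1 := by
  have hne : X.Nonempty := Finset.card_pos.mp (by omega)
  have hmm : fmin X ≤ fmax X := le_fmax (fmin_mem hne)
  have hsub : X ⊆ Finset.Icc (fmin X) (fmax X) :=
    fun x hx => Finset.mem_Icc.mpr ⟨fmin_le hx, le_fmax hx⟩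
  have := Finset.card_le_card hsub
  rw [Nat.card_Icc, hc] at this
  omega

noncomputable def key (X : Finset ℕ) : ℕ ×ₗ (ℕ ×ₗ ℕ) :=
  toLex (fmin X, toLex (fmax X, Encodable.encode X))

lemma key_injective : Function.Injective key := by
  intro X Y h
  unfold key at h
  have h2 : (fmin X, toLex (fmax X, Encodable.encode X)) =
      (fmin Y, toLex (fmax Y, Encodable.encode Y)) := congrArg ofLex h
  exact Encodable.encode_injective (congrArg (fun p => (ofLex p.2).2) h2)

lemma key_lt_iff {X Y : Finset ℕ} : key X < key Y ↔
    fmin X < fmin Y ∨ fmin X = fmin Y ∧ (fmax X < fmax Y ∨ fmax X = fmax Y ∧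
      Encodable.encode X < Encodable.encode Y) := by
  simp [key, Prod.Lex.lt_iff]

lemma key_le_iff {X Y : Finset ℕ} : key X ≤ key Y ↔
    fmin X < fmin Y ∨ fmin X = fmin Y ∧ (fmax X < fmax Y ∨ fmax X = fmax Y ∧
      Encodable.encode X ≤ Encodable.encode Y) := by
  simp [key, Prod.Lex.le_iff, Prod.Lex.lt_iff]

lemma mem_Vnkb {n k b : ℕ} {X : Finset ℕ} :
    X ∈ Vnkb n k b ↔ X ⊆ Finset.range (n+1) ∧ X.card = k ∧ fmax X - fmin X ≤ b := by
  simp [Vnkb, Finset.mem_powersetCard, and_assoc]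

lemma cls_card (n k b m L : ℕ) (hk : 1 ≤ k) :
    ((Vnkb n k b).filter (fun Z => fmin Z = m ∧ fmax Z ≤ m + L)).card ≤
      Nat.choose L (k-1) := by
  have h := Finset.card_le_card_of_injOn
    (s := (Vnkb n k b).filter (fun Z => fmin Z = m ∧ fmax Z ≤ m + L))
    (t := (Finset.Ioc m (m+L)).powersetCard (k-1))
    (fun (Z : Finset ℕ) => Z.erase m) ?_ ?_
  · rwa [Finset.card_powersetCard, Nat.card_Ioc, Nat.add_sub_cancel_left] at h
  · intro Z hZ
    rw [Finset.mem_coe, Finset.mem_filter, mem_Vnkb] at hZ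
    obtain ⟨⟨_, hcard, _⟩, hmin, hmax⟩ := hZ
    have hne : Z.Nonempty := Finset.card_pos.mp (by omega)
    have hm : m ∈ Z := hmin ▸ fmin_mem hne
    rw [Finset.mem_coe, Finset.mem_powersetCard]
    refine ⟨fun x hx => ?_, by rw [Finset.card_erase_of_mem hm, hcard]⟩
    rw [Finset.mem_erase] at hx
    exact Finset.mem_Ioc.mpr ⟨lt_of_le_of_ne (hmin ▸ fmin_le hx.2) (Ne.symm hx.1),
      le_trans (le_fmax hx.2) hmax⟩
  · intro Z1 h1 Z2 h2 he
    simp only [Finset.coe_filter, Set.mem_setOf_eq, mem_Vnkb] at h1 h2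
    obtain ⟨⟨-, hc1, -⟩, hmin1, -⟩ := h1
    obtain ⟨⟨-, hc2, -⟩, hmin2, -⟩ := h2
    have hm1 : m ∈ Z1 := hmin1 ▸ fmin_mem (Finset.card_pos.mp (by omega))
    have hm2 : m ∈ Z2 := hmin2 ▸ fmin_mem (Finset.card_pos.mp (by omega))
    rw [← Finset.insert_erase hm1, ← Finset.insert_erase hm2]
    simp only [] at he; rw [he]

lemma key_identity (b k : ℕ) (hk : 1 ≤ k) :
    k * Nat.choose b k = (b - (k-1)) * Nat.choose b (k-1) := by
  have h := Nat.choose_succ_right_eq b (k-1)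
  have hk' : k - 1 + 1 = k := by omega
  rw [hk'] at h
  rw [Nat.mul_comm, h, Nat.mul_comm]

lemma arith (b k d C C' : ℕ) (hk : 2 ≤ k) (hkb : k - 1 ≤ b) (hd1 : 1 ≤ d)
    (hd : d + (k-1) ≤ b) (hC1 : 1 ≤ C) (hC'le : C' ≤ C)
    (hC'1 : d + (k-1) = b → C' = 1) :
    (C - 1) + (d-1) * C + C' ≤ (b - (k-1)) * C := by
  have ha : (d-1)*C + C = d*C := by
    have hd' : d - 1 + 1 = d := by omega
    rw [← Nat.succ_mul, Nat.succ_eq_add_one, hd']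
  have hb' : C ≤ d*C := Nat.le_mul_of_pos_left C (by omega)
  rcases Nat.lt_or_ge d (b - (k-1)) with hlt | hge
  · have hc' : (d+1)*C ≤ (b-(k-1))*C := Nat.mul_le_mul_right _ (by omega)
    have hd2 : (d+1)*C = d*C + C := by ring
    omega
  · have hde : d = b - (k-1) := by omega
    have h1 : C' = 1 := hC'1 (by omega)
    rw [← hde]
    omega

def VT (n k b : ℕ) : Type := {x : Finset ℕ // x ∈ Vnkb n k b}

noncomputable def keyV {n k b : ℕ} (X : VT n k b) : ℕ ×ₗ (ℕ ×ₗ ℕ) := key X.1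

noncomputable instance (n k b : ℕ) : LinearOrder (VT n k b) :=
  LinearOrder.lift' keyV (fun X Y h => Subtype.ext (key_injective h))

noncomputable instance (n k b : ℕ) : Fintype (VT n k b) :=
  inferInstanceAs (Fintype ↥(Vnkb n k b))

lemma VT_le_iff {n k b : ℕ} (u v : VT n k b) : u ≤ v ↔ keyV u ≤ keyV v := Iff.rfl

lemma VT_lt_iff {n k b : ℕ} (u v : VT n k b) : u < v ↔ keyV u < keyV v := by
  rw [lt_iff_le_not_ge, lt_iff_le_not_ge, VT_le_iff, VT_le_iff]


/-- The bandwidth of `G_{n,k,b}` is at most `k·C(b,k)`. -/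
theorem bandwidth_le (n k b : ℕ) (h1 : 1 ≤ k - 1) (h2 : k - 1 ≤ b) (h3 : b ≤ n) :
    bandwidth (Gnkb n k b) ≤ k * Nat.choose b k := by
  classical
  have hk2 : 2 ≤ k := by omega
  let E : ↥(Vnkb n k b) ≃ VT n k b := ⟨fun x => x, fun x => x, fun _ => rfl, fun _ => rfl⟩
  have hcard : Fintype.card (VT n k b) = Fintype.card ↥(Vnkb n k b) := rfl
  let g : Fin (Fintype.card ↥(Vnkb n k b)) ≃o VT n k b :=
    Fintype.orderIsoFinOfCardEq _ hcard
  apply Nat.sInf_le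
  refine ⟨E.trans g.toEquiv.symm, ?_⟩
  suffices H : ∀ u v : ↥(Vnkb n k b), (Gnkb n k b).Adj u v → key u.1 ≤ key v.1 →
      ((g.symm (E v) : Fin _) : ℕ) - ((g.symm (E u) : Fin _) : ℕ) ≤ k * Nat.choose b k by
    intro u v huv
    have e1 : ((E.trans g.toEquiv.symm) u : Fin _) = g.symm (E u) := rfl
    have e2 : ((E.trans g.toEquiv.symm) v : Fin _) = g.symm (E v) := rfl
    rw [e1, e2]
    rcases le_total (key u.1) (key v.1) with h | h
    · have h0 := H u v huv h
      have hm : g.symm (E u) ≤ g.symm (E v) := g.symm.monotone ((VT_le_iff _ _).mpr h)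
      have h2' : ((g.symm (E u) : Fin _) : ℕ) ≤ ((g.symm (E v) : Fin _) : ℕ) := hm
      omega
    · have h0 := H v u ((Gnkb n k b).adj_symm huv) h
      have hm : g.symm (E v) ≤ g.symm (E u) := g.symm.monotone ((VT_le_iff _ _).mpr h)
      have h2' : ((g.symm (E v) : Fin _) : ℕ) ≤ ((g.symm (E u) : Fin _) : ℕ) := hm
      omega
  intro u v hadj hkeyle
  obtain ⟨hne_uv, hadjb⟩ := hadj
  have hu := u.2; have hv := v.2
  rw [mem_Vnkb] at hu hv
  obtain ⟨husub, hucard, hub⟩ := hu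
  obtain ⟨hvsub, hvcard, hvb⟩ := hv
  have hune : u.1.Nonempty := Finset.card_pos.mp (by omega)
  have hvne : v.1.Nonempty := Finset.card_pos.mp (by omega)
  have hminuv : fmin u.1 ≤ fmin v.1 := by
    have := key_le_iff.mp hkeyle; omega
  have hmaxvb : fmax v.1 ≤ fmin u.1 + b := by
    have ha : fmax v.1 ≤ fmax (u.1 ∪ v.1) :=
      le_fmax (Finset.mem_union_right _ (fmax_mem hvne))
    have hb' : fmin (u.1 ∪ v.1) ≤ fmin u.1 :=
      fmin_le (Finset.mem_union_left _ (fmin_mem hune))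
    omega
  have hspreadv := spread hvcard (by omega)
  set T := (Vnkb n k b).filter (fun Z => key u.1 < key Z ∧ key Z ≤ key v.1) with hT
  have hstep1 : ((g.symm (E v) : Fin _) : ℕ) - ((g.symm (E u) : Fin _) : ℕ) ≤ T.card := by
    have hIoc := Finset.card_le_card_of_injOn
      (s := Finset.Ioc (g.symm (E u)) (g.symm (E v))) (t := T) (fun j => (g j).1) ?_ ?_
    · rwa [Fin.card_Ioc] at hIoc
    · intro j hj
      rw [Finset.mem_coe, Finset.mem_Ioc] at hj
      rw [Finset.mem_coe, hT, Finset.mem_filter]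
      refine ⟨(g j).2, ?_, ?_⟩
      · have h' : E u < g j := by
          have := g.strictMono hj.1
          rwa [OrderIso.apply_symm_apply] at this
        exact (VT_lt_iff (E u) (g j)).mp h'
      · have h' : g j ≤ E v := by
          have := g.monotone hj.2
          rwa [OrderIso.apply_symm_apply] at this
        exact (VT_le_iff (g j) (E v)).mp h'
    · intro j1 _ j2 _ he
      exact g.injective (Subtype.ext he)
  have hCpos : 1 ≤ Nat.choose b (k-1) := Nat.choose_pos (by omega)
  have hF1 : (((Vnkb n k b).filter
      (fun Z => fmin Z = fmin u.1 ∧ fmax Z ≤ fmin u.1 + b)).erase u.1).card ≤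
      Nat.choose b (k-1) - 1 := by
    have hmem : u.1 ∈ (Vnkb n k b).filter
        (fun Z => fmin Z = fmin u.1 ∧ fmax Z ≤ fmin u.1 + b) := by
      rw [Finset.mem_filter]
      exact ⟨u.2, rfl, by omega⟩
    rw [Finset.card_erase_of_mem hmem]
    have := cls_card n k b (fmin u.1) b (by omega)
    omega
  rcases eq_or_lt_of_le hminuv with heq | hltmin
  · -- same min class
    have hsub : T ⊆ ((Vnkb n k b).filter
        (fun Z => fmin Z = fmin u.1 ∧ fmax Z ≤ fmin u.1 + b)).erase u.1 := by
      intro Z hZ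
      rw [hT, Finset.mem_filter] at hZ
      obtain ⟨hZV, hZgt, hZle⟩ := hZ
      have hZV' := hZV; rw [mem_Vnkb] at hZV'
      obtain ⟨-, hZcard, hZb⟩ := hZV'
      have l1 := key_lt_iff.mp hZgt
      have l2 := key_le_iff.mp hZle
      rw [Finset.mem_erase, Finset.mem_filter]
      refine ⟨?_, hZV, by omega, by omega⟩
      rintro rfl
      exact lt_irrefl _ hZgt
    have hcd := Finset.card_le_card hsub
    have hfin : Nat.choose b (k-1) - 1 ≤ k * Nat.choose b k := by
      rw [key_identity b k (by omega)]
      rcases Nat.eq_or_lt_of_le h2 with hbe | hbl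
      · have : Nat.choose b (k-1) = 1 := by
          rw [← hbe]; exact Nat.choose_self (k-1)
        omega
      · have h5 : 1 * Nat.choose b (k-1) ≤ (b - (k-1)) * Nat.choose b (k-1) :=
          Nat.mul_le_mul_right _ (by omega)
        omega
    omega
  · -- different min classes
    set d := fmin v.1 - fmin u.1 with hd
    have hd1 : 1 ≤ d := by omega
    have hdkb : d + (k-1) ≤ b := by omega
    have hsub : T ⊆ ((((Vnkb n k b).filter
          (fun Z => fmin Z = fmin u.1 ∧ fmax Z ≤ fmin u.1 + b)).erase u.1)
        ∪ ((Finset.Ioo (fmin u.1) (fmin v.1)).biUnion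
            (fun m => (Vnkb n k b).filter (fun Z => fmin Z = m ∧ fmax Z ≤ m + b))))
        ∪ ((Vnkb n k b).filter
            (fun Z => fmin Z = fmin v.1 ∧ fmax Z ≤ fmin v.1 + (b - d))) := by
      intro Z hZ
      rw [hT, Finset.mem_filter] at hZ
      obtain ⟨hZV, hZgt, hZle⟩ := hZ
      have hZV' := hZV; rw [mem_Vnkb] at hZV'
      obtain ⟨-, hZcard, hZb⟩ := hZV'
      have l1 := key_lt_iff.mp hZgt
      have l2 := key_le_iff.mp hZle
      have hminZ1 : fmin u.1 ≤ fmin Z := by omega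
      have hminZ2 : fmin Z ≤ fmin v.1 := by omega
      rw [Finset.mem_union, Finset.mem_union]
      rcases eq_or_lt_of_le hminZ1 with he1 | hl1
      · left; left
        rw [Finset.mem_erase, Finset.mem_filter]
        refine ⟨?_, hZV, he1.symm, by omega⟩
        rintro rfl
        exact lt_irrefl _ hZgt
      · rcases eq_or_lt_of_le hminZ2 with he2 | hl2
        · right
          rw [Finset.mem_filter]
          refine ⟨hZV, he2, by omega⟩
        · left; right
          rw [Finset.mem_biUnion]
          exact ⟨fmin Z, Finset.mem_Ioo.mpr ⟨hl1, hl2⟩,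
            Finset.mem_filter.mpr ⟨hZV, rfl, by omega⟩⟩
    have hF2 : ((Finset.Ioo (fmin u.1) (fmin v.1)).biUnion
        (fun m => (Vnkb n k b).filter (fun Z => fmin Z = m ∧ fmax Z ≤ m + b))).card ≤
        (d-1) * Nat.choose b (k-1) := by
      refine le_trans (Finset.card_biUnion_le) ?_
      refine le_trans (Finset.sum_le_card_nsmul _ _ (Nat.choose b (k-1))
        (fun m _ => cls_card n k b m b (by omega))) ?_
      rw [smul_eq_mul, Nat.card_Ioo]
    have hF3 : ((Vnkb n k b).filter
        (fun Z => fmin Z = fmin v.1 ∧ fmax Z ≤ fmin v.1 + (b - d))).card ≤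
        Nat.choose (b-d) (k-1) := cls_card n k b (fmin v.1) (b-d) (by omega)
    have hcd := Finset.card_le_card hsub
    have hcu := Finset.card_union_le
      ((((Vnkb n k b).filter
          (fun Z => fmin Z = fmin u.1 ∧ fmax Z ≤ fmin u.1 + b)).erase u.1)
        ∪ ((Finset.Ioo (fmin u.1) (fmin v.1)).biUnion
            (fun m => (Vnkb n k b).filter (fun Z => fmin Z = m ∧ fmax Z ≤ m + b))))
      ((Vnkb n k b).filter
            (fun Z => fmin Z = fmin v.1 ∧ fmax Z ≤ fmin v.1 + (b - d)))
    have hcu2 := Finset.card_union_le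
      (((Vnkb n k b).filter
          (fun Z => fmin Z = fmin u.1 ∧ fmax Z ≤ fmin u.1 + b)).erase u.1)
      ((Finset.Ioo (fmin u.1) (fmin v.1)).biUnion
            (fun m => (Vnkb n k b).filter (fun Z => fmin Z = m ∧ fmax Z ≤ m + b)))
    have hCle : Nat.choose (b-d) (k-1) ≤ Nat.choose b (k-1) :=
      Nat.choose_le_choose _ (by omega)
    have hC1' : d + (k-1) = b → Nat.choose (b-d) (k-1) = 1 := by
      intro hh
      have : b - d = k - 1 := by omega
      rw [this]
      exact Nat.choose_self (k-1)
    have harith := arith b k d (Nat.choose b (k-1)) (Nat.choose (b-d) (k-1))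
      hk2 h2 hd1 hdkb hCpos hCle hC1'
    rw [key_identity b k (by omega)]
    omega
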